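/- Let 𝒜 = [Z, R₁, R₂] be a consistent bounded preference system on a finite set Z = {z₁,…,z_s} with minimal element z₁ and maximal element z₂, let δ ∈ [0,1] with C_δ ≠ ∅, let γ ∈ [0,1], and let p̂, q̂ be probability mass functions on Z. Then min over v ∈ C_δ of Σ_{ℓ=1}^{s} v_ℓ·((γδ_{z₁}+(1−γ)p̂)({z_ℓ}) − (γδ_{z₂}+(1−γ)q̂)({z_ℓ})) = (1−γ) · [min over v ∈ C_δ of Σ_{ℓ=1}^{s} v_ℓ·(p̂({z_ℓ}) − q̂({z_ℓ}))] − γ; i.e., the robustified statistic under the γ-contamination model is the stated affine (shifted and scaled) transformation of the unrobustified statistic. -/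

import Mathlib

open MeasureTheory
open scoped BigOperators

namespace GSD

/-- The strict part `P_R` of a binary relation `R`. -/
def strictPart {α : Type*} (R : α → α → Prop) (a b : α) : Prop := R a b ∧ ¬ R b a

/-- The indifference part `I_R` of a binary relation `R`. -/
def indiffPart {α : Type*} (R : α → α → Prop) (a b : α) : Prop := R a b ∧ R b a

/-- `[A, R1, R2]` is a preference system: `R1` is a preorder on `A` and `R2` is a preorder
on `R1` (i.e. a reflexive-transitive relation supported on pairs belonging to `R1`). -/
structure IsPrefSystem {A : Type*} (R1 : A → A → Prop) (R2 : A × A → A × A → Prop) : Prop where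
  refl1 : ∀ a, R1 a a
  trans1 : ∀ a b c, R1 a b → R1 b c → R1 a c
  sub2 : ∀ p q, R2 p q → R1 p.1 p.2 ∧ R1 q.1 q.2
  refl2 : ∀ p, R1 p.1 p.2 → R2 p p
  trans2 : ∀ p q r, R2 p q → R2 q r → R2 p r

/-- `u` is a representation of the preference system `[A, R1, R2]`. -/
def IsRepresentation {A : Type*} (R1 : A → A → Prop) (R2 : A × A → A × A → Prop)
    (u : A → ℝ) : Prop :=
  (∀ a b, R1 a b → (u b ≤ u a ∧ (u a = u b ↔ R1 b a))) ∧
  (∀ a b c d, R2 (a, b) (c, d) →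
    (u c - u d ≤ u a - u b ∧ (u a - u b = u c - u d ↔ R2 (c, d) (a, b))))

/-- A preference system is consistent if it admits a representation. -/
def Consistent {A : Type*} (R1 : A → A → Prop) (R2 : A × A → A × A → Prop) : Prop :=
  ∃ u, IsRepresentation R1 R2 u

/-- The preference system is bounded with minimal element `a0` and maximal element `a1`. -/
def Bounded {A : Type*} (R1 : A → A → Prop) (a0 a1 : A) : Prop :=
  (∀ a, R1 a1 a) ∧ (∀ a, R1 a a0) ∧ strictPart R1 a1 a0

/-- Membership in the normalized representation set `𝒩_𝒜`. -/
def NormRep {A : Type*} (R1 : A → A → Prop) (R2 : A × A → A × A → Prop) (a0 a1 : A)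
    (u : A → ℝ) : Prop :=
  IsRepresentation R1 R2 u ∧ u a0 = 0 ∧ u a1 = 1

/-- Membership in `𝒩^δ_𝒜`: normalized representations separating strict pairs by at least `δ`. -/
def NormRepDelta {A : Type*} (R1 : A → A → Prop) (R2 : A × A → A × A → Prop) (a0 a1 : A)
    (δ : ℝ) (u : A → ℝ) : Prop :=
  NormRep R1 R2 a0 a1 u ∧
  (∀ a b, strictPart R1 a b → δ ≤ u a - u b) ∧
  (∀ c d e f, strictPart R2 (c, d) (e, f) → δ ≤ u c - u d - u e + u f)

/-- The constraint set `C` of vectors `(v₁,…,v_s,ξ) ∈ [0,1]^{s+1}`. -/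
def ConstraintSet {s : ℕ} (R1 : Fin s → Fin s → Prop)
    (R2 : (Fin s × Fin s) → (Fin s × Fin s) → Prop) (a0 a1 : Fin s) :
    Set ((Fin s → ℝ) × ℝ) :=
  {w | (∀ i, w.1 i ∈ Set.Icc (0:ℝ) 1) ∧ w.2 ∈ Set.Icc (0:ℝ) 1 ∧
    w.1 a0 = 0 ∧ w.1 a1 = 1 ∧
    (∀ i j, indiffPart R1 i j → w.1 i = w.1 j) ∧
    (∀ i j, strictPart R1 i j → w.2 ≤ w.1 i - w.1 j) ∧
    (∀ k l r t, indiffPart R2 (k, l) (r, t) → w.1 k - w.1 l = w.1 r - w.1 t) ∧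
    (∀ k l r t, strictPart R2 (k, l) (r, t) → w.2 ≤ w.1 k - w.1 l - w.1 r + w.1 t)}

/-- The slice `C_{ξ₀}` of the constraint set at threshold `ξ₀`. -/
def ConstraintSetAt {s : ℕ} (R1 : Fin s → Fin s → Prop)
    (R2 : (Fin s × Fin s) → (Fin s × Fin s) → Prop) (a0 a1 : Fin s) (ξ0 : ℝ) :
    Set (Fin s → ℝ) :=
  {v | (v, ξ0) ∈ ConstraintSet R1 R2 a0 a1}

/-- `p` is a probability mass function on `Fin s` (with values in `[0,1]`). -/
def IsPMF {s : ℕ} (p : Fin s → ℝ) : Prop :=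
  (∀ i, p i ∈ Set.Icc (0:ℝ) 1) ∧ ∑ i, p i = 1

/-- The robustified statistic under the `γ`-contamination model is an affine transformation
of the unrobustified one: `min_{C_δ} Σ v·(π₁−π₂) = (1−γ)·min_{C_δ} Σ v·(p̂−q̂) − γ`. -/
theorem stmt11 {s : ℕ} (R1 : Fin s → Fin s → Prop)
    (R2 : (Fin s × Fin s) → (Fin s × Fin s) → Prop) (a0 a1 : Fin s)
    (hps : IsPrefSystem R1 R2) (hcons : Consistent R1 R2) (hbd : Bounded R1 a0 a1)
    (δ : ℝ) (hδ : δ ∈ Set.Icc (0:ℝ) 1)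
    (hne : (ConstraintSetAt R1 R2 a0 a1 δ).Nonempty)
    (γ : ℝ) (hγ : γ ∈ Set.Icc (0:ℝ) 1)
    (p q : Fin s → ℝ) (hp : IsPMF p) (hq : IsPMF q) :
    sInf {x | ∃ v ∈ ConstraintSetAt R1 R2 a0 a1 δ,
        x = ∑ i, v i *
          ((γ * (if i = a0 then 1 else 0) + (1 - γ) * p i) -
           (γ * (if i = a1 then 1 else 0) + (1 - γ) * q i))} =
    (1 - γ) * sInf {x | ∃ v ∈ ConstraintSetAt R1 R2 a0 a1 δ,
        x = ∑ i, v i * (p i - q i)} - γ := by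
  set S : Set ℝ := {x | ∃ v ∈ ConstraintSetAt R1 R2 a0 a1 δ,
      x = ∑ i, v i * (p i - q i)} with hS
  set f : ℝ → ℝ := fun x => (1 - γ) * x - γ with hf
  -- key computation
  have key : ∀ v ∈ ConstraintSetAt R1 R2 a0 a1 δ,
      (∑ i, v i * ((γ * (if i = a0 then 1 else 0) + (1 - γ) * p i) -
           (γ * (if i = a1 then 1 else 0) + (1 - γ) * q i)))
      = f (∑ i, v i * (p i - q i)) := by
    intro v hv
    obtain ⟨_, _, h0, h1, _⟩ := hv
    have step : ∀ i, v i * ((γ * (if i = a0 then 1 else 0) + (1 - γ) * p i) -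
           (γ * (if i = a1 then 1 else 0) + (1 - γ) * q i))
        = (if i = a0 then γ * v i else 0) - (if i = a1 then γ * v i else 0)
          + (1 - γ) * (v i * (p i - q i)) := by
      intro i; split_ifs <;> ring
    rw [Finset.sum_congr rfl (fun i _ => step i)]
    rw [Finset.sum_add_distrib, Finset.sum_sub_distrib,
      Finset.sum_ite_eq' Finset.univ a0 (fun i => γ * v i),
      Finset.sum_ite_eq' Finset.univ a1 (fun i => γ * v i),
      ← Finset.mul_sum]
    have h0' : v a0 = 0 := h0
    have h1' : v a1 = 1 := h1
    simp only [f, Finset.mem_univ, if_true, h0', h1']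
    ring_nf
  -- the LHS set is the image of S under f
  have himg : {x | ∃ v ∈ ConstraintSetAt R1 R2 a0 a1 δ,
        x = ∑ i, v i *
          ((γ * (if i = a0 then 1 else 0) + (1 - γ) * p i) -
           (γ * (if i = a1 then 1 else 0) + (1 - γ) * q i))} = f '' S := by
    ext x
    constructor
    · rintro ⟨v, hv, rfl⟩
      exact ⟨∑ i, v i * (p i - q i), ⟨v, hv, rfl⟩, (key v hv).symm⟩
    · rintro ⟨y, ⟨v, hv, rfl⟩, rfl⟩
      exact ⟨v, hv, (key v hv).symm⟩
  have hSne : S.Nonempty := by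
    obtain ⟨v, hv⟩ := hne
    exact ⟨∑ i, v i * (p i - q i), v, hv, rfl⟩
  have hSbdd : BddBelow S := by
    refine ⟨-1, ?_⟩
    rintro x ⟨v, hv, rfl⟩
    obtain ⟨hvmem, _⟩ := hv
    have hterm : ∀ i ∈ Finset.univ, -q i ≤ v i * (p i - q i) := by
      intro i _
      have hv0 := (hvmem i).1
      have hv1 := (hvmem i).2
      have hp0 := (hp.1 i).1
      have hq0 := (hq.1 i).1
      nlinarith [mul_nonneg hv0 hp0]
    calc (-1 : ℝ) = ∑ i, -q i := by
          rw [Finset.sum_neg_distrib, hq.2]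
      _ ≤ ∑ i, v i * (p i - q i) := Finset.sum_le_sum hterm
  have hmono : Monotone f := by
    intro a b hab
    have h1γ : (0:ℝ) ≤ 1 - γ := by linarith [hγ.2]
    simp only [f]
    nlinarith
  have hcont : ContinuousAt f (sInf S) := by fun_prop
  rw [himg, ← Monotone.map_csInf_of_continuousAt hcont hmono hSne hSbdd]

end GSD
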